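/- Let D be symmetric positive definite and b₁, b₂ vectors with b₁ᵀ(D + b₂b₂ᵀ)⁻¹b₁ ≤ 1. Then D + b₂b₂ᵀ − b₁b₁ᵀ is positive semidefinite. (Comparison of SRLTE with SRLE: MSEM(SRLE) − MSEM(SRLTE) ≥ 0 under the stated conditions.) -/

import Mathlib

open Matrix

private lemma vecMulVec_mulVec' {n : ℕ} (b x : Fin n → ℝ) :
    vecMulVec b b *ᵥ x = (b ⬝ᵥ x) • b := by
  funext i
  simp [mulVec, dotProduct, vecMulVec_apply, Finset.mul_sum, mul_comm, mul_left_comm]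

private lemma psd_vecMulVec {n : ℕ} (b : Fin n → ℝ) : (vecMulVec b b).PosSemidef := by
  refine PosSemidef.of_dotProduct_mulVec_nonneg ?_ ?_
  · ext i j
    simp [vecMulVec_apply, conjTranspose_apply, mul_comm]
  · intro x
    rw [vecMulVec_mulVec']
    simp only [star_trivial, dotProduct_smul, smul_eq_mul, RCLike.re_to_real]
    rw [dotProduct_comm]
    exact mul_self_nonneg _

theorem stmt14 {n : ℕ} (D : Matrix (Fin n) (Fin n) ℝ) (hD : D.PosDef)
    (b₁ b₂ : Fin n → ℝ)
    (hb : b₁ ⬝ᵥ ((D + vecMulVec b₂ b₂)⁻¹ *ᵥ b₁) ≤ 1) :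
    (D + vecMulVec b₂ b₂ - vecMulVec b₁ b₁).PosSemidef := by
  set A := D + vecMulVec b₂ b₂ with hAdef
  have hA : A.PosDef := hD.add_posSemidef (psd_vecMulVec b₂)
  set S := (open scoped MatrixOrder in CFC.sqrt A) with hSdef
  have hS : S.PosSemidef := by
    open scoped MatrixOrder in exact Matrix.nonneg_iff_posSemidef.mp (CFC.sqrt_nonneg A)
  have hSS : S * S = A := by
    open scoped MatrixOrder in exact CFC.sqrt_mul_sqrt_self A hA.posSemidef.nonneg
  have hST : Sᵀ = S := by
    have := hS.isHermitian
    rwa [IsHermitian, conjTranspose] at this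
    -- over ℝ, star is identity
  have hswap : ∀ u v : Fin n → ℝ, u ⬝ᵥ (S *ᵥ v) = (S *ᵥ u) ⬝ᵥ v := by
    intro u v
    rw [dotProduct_mulVec, ← mulVec_transpose, hST]
  set c : Fin n → ℝ := A⁻¹ *ᵥ b₁ with hcdef
  have hAc : S *ᵥ (S *ᵥ c) = b₁ := by
    rw [mulVec_mulVec, hSS, hcdef, mulVec_mulVec, mul_nonsing_inv _ (hA.det_pos.ne'.isUnit),
      one_mulVec]
  set c' : Fin n → ℝ := S *ᵥ c with hc'def
  have hc' : c' ⬝ᵥ c' ≤ 1 := by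
    calc c' ⬝ᵥ c' = (S *ᵥ c') ⬝ᵥ c := by rw [hc'def, hswap]
    _ = b₁ ⬝ᵥ (A⁻¹ *ᵥ b₁) := by rw [hAc, hcdef]
    _ ≤ 1 := hb
  refine PosSemidef.of_dotProduct_mulVec_nonneg ?_ ?_
  · exact hA.isHermitian.sub (psd_vecMulVec b₁).isHermitian
  · intro x
    simp only [star_trivial, RCLike.re_to_real, sub_mulVec, dotProduct_sub]
    rw [sub_nonneg]
    have h1 : x ⬝ᵥ (vecMulVec b₁ b₁ *ᵥ x) = (b₁ ⬝ᵥ x) ^ 2 := by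
      rw [vecMulVec_mulVec', dotProduct_smul, smul_eq_mul, dotProduct_comm, sq]
    have h2 : x ⬝ᵥ (A *ᵥ x) = (S *ᵥ x) ⬝ᵥ (S *ᵥ x) := by
      rw [← hSS, ← mulVec_mulVec, hswap]
    have h3 : b₁ ⬝ᵥ x = c' ⬝ᵥ (S *ᵥ x) := by
      rw [← hAc, hswap]
    rw [h1, h2, h3]
    calc (c' ⬝ᵥ (S *ᵥ x)) ^ 2 ≤ (c' ⬝ᵥ c') * ((S *ᵥ x) ⬝ᵥ (S *ᵥ x)) := by
          simpa only [dotProduct, sq] using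
            Finset.sum_mul_sq_le_sq_mul_sq Finset.univ c' (S *ᵥ x)
    _ ≤ 1 * ((S *ᵥ x) ⬝ᵥ (S *ᵥ x)) := by
          apply mul_le_mul_of_nonneg_right hc'
          simpa [dotProduct] using Finset.sum_nonneg fun i _ => mul_self_nonneg ((S *ᵥ x) i)
    _ = (S *ᵥ x) ⬝ᵥ (S *ᵥ x) := one_mul _
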